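/- arXiv:1207.4650 — 2 statements merged into one kernel-verified Lean document; each statement's English description precedes it below -/
import Mathlib

section
/- Let G be a finitely generated group and let H be a subgroup of G of finite index. Then RG(G) = RG(H)/[G : H]. -/
/-- `dGen G` is the minimal number of generators of the group `G`. -/
noncomputable def dGen (G : Type*) [Group G] : ℕ :=
  sInf {n : ℕ | ∃ S : Finset G, S.card = n ∧ Subgroup.closure (S : Set G) = ⊤}

/-- The rank gradient of `G`. -/
noncomputable def rankGradient (G : Type*) [Group G] : ℝ :=
  sInf {r : ℝ | ∃ H : Subgroup G, H.index ≠ 0 ∧ r = ((dGen H : ℝ) - 1) / (H.index : ℝ)}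

open scoped commutatorElement in
/-- The subgroup `[G,G]G^p` of `G` (as a normal closure of its generators). -/
def pCommPow (p : ℕ) (G : Type*) [Group G] : Subgroup G :=
  Subgroup.normalClosure ({x | ∃ a b : G, x = ⁅a, b⁆} ∪ {x | ∃ g : G, x = g ^ p})

instance pCommPow_normal (p : ℕ) (G : Type*) [Group G] : (pCommPow p G).Normal :=
  Subgroup.normalClosure_normal

/-- `d_p(G) = d(G/([G,G]G^p))`. -/
noncomputable def dp (p : ℕ) (G : Type*) [Group G] : ℕ :=
  dGen (G ⧸ pCommPow p G)

/-- The `p`-gradient of `G`. -/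
noncomputable def pGradient (p : ℕ) (G : Type*) [Group G] : ℝ :=
  sInf {r : ℝ | ∃ H : Subgroup G, H.Normal ∧ (∃ k : ℕ, H.index = p ^ k) ∧
    r = ((dp p H : ℝ) - 1) / (H.index : ℝ)}

/-- The `p`-residual: intersection of all normal subgroups of `p`-power index. -/
def pResidual (p : ℕ) (G : Type*) [Group G] : Subgroup G :=
  ⨅ H ∈ {H : Subgroup G | H.Normal ∧ ∃ k : ℕ, H.index = p ^ k}, H

instance pResidual_normal (p : ℕ) (G : Type*) [Group G] : (pResidual p G).Normal := by
  constructor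
  intro n hn g
  simp only [pResidual, Subgroup.mem_iInf] at hn ⊢
  intro H hH
  exact hH.1.conj_mem n (hn H hH) g


namespace RGAux

open Subgroup

variable {A : Type*} [Group A] (B : Subgroup A) (S : Finset A)

/-- The base point of the coset space. -/
abbrev base : A ⧸ B := ((1 : A) : A ⧸ B)

/-- A list of elements of `S ∪ S⁻¹`. -/
def IsWord (l : List A) : Prop := ∀ x ∈ l, x ∈ S ∨ x⁻¹ ∈ S

theorem exists_word (hS : Subgroup.closure (S : Set A) = ⊤) (g : A) :
    ∃ l : List A, IsWord S l ∧ l.prod = g := by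
  have hg : g ∈ Subgroup.closure (S : Set A) := hS ▸ mem_top g
  induction hg using closure_induction with
  | mem x hx => exact ⟨[x], fun y hy => by simp at hy; subst hy; exact Or.inl hx, by simp⟩
  | one => exact ⟨[], fun y hy => by simp at hy, by simp⟩
  | mul x y hx hy ihx ihy =>
    obtain ⟨l₁, hl₁, rfl⟩ := ihx
    obtain ⟨l₂, hl₂, rfl⟩ := ihy
    exact ⟨l₁ ++ l₂, fun z hz => by
      rcases List.mem_append.mp hz with h | h
      exacts [hl₁ z h, hl₂ z h], by simp⟩
  | inv x hx ihx =>
    obtain ⟨l, hl, rfl⟩ := ihx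
    refine ⟨(l.map (fun y => y⁻¹)).reverse, fun z hz => ?_, (List.prod_inv_reverse l).symm⟩
    simp only [List.mem_reverse, List.mem_map] at hz
    obtain ⟨y, hy, rfl⟩ := hz
    rcases hl y hy with h | h
    · exact Or.inr (by simpa using h)
    · exact Or.inl h

/-- Distance in the Schreier graph from the base coset. -/
noncomputable def dist (c : A ⧸ B) : ℕ :=
  sInf {n | ∃ l : List A, IsWord S l ∧ l.length = n ∧ l.prod • (base B) = c}

theorem dist_spec (hS : Subgroup.closure (S : Set A) = ⊤) (c : A ⧸ B) :
    ∃ l : List A, IsWord S l ∧ l.length = dist B S c ∧ l.prod • (base B) = c := by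
  have hne : {n | ∃ l : List A, IsWord S l ∧ l.length = n ∧ l.prod • (base B) = c}.Nonempty := by
    obtain ⟨g, rfl⟩ := QuotientGroup.mk_surjective c
    obtain ⟨l, hl, hp⟩ := exists_word S hS g
    refine ⟨l.length, l, hl, rfl, ?_⟩
    rw [hp]
    show g • ((1 : A) : A ⧸ B) = _
    rw [MulAction.Quotient.smul_mk, smul_eq_mul, mul_one]
  exact Nat.sInf_mem hne

theorem dist_le {c : A ⧸ B} {l : List A} (hl : IsWord S l) (hc : l.prod • (base B) = c) :
    dist B S c ≤ l.length :=
  Nat.sInf_le ⟨l, hl, rfl, hc⟩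

theorem exists_step (hS : Subgroup.closure (S : Set A) = ⊤) {c : A ⧸ B} (hc : c ≠ base B) :
    ∃ xp : A × (A ⧸ B), (xp.1 ∈ S ∨ xp.1⁻¹ ∈ S) ∧ c = xp.1 • xp.2 ∧
      dist B S xp.2 < dist B S c := by
  obtain ⟨l, hl, hlen, hprod⟩ := dist_spec B S hS c
  cases l with
  | nil => exact absurd (by simpa using hprod.symm) hc
  | cons x t =>
    refine ⟨(x, t.prod • base B), hl x List.mem_cons_self, ?_, ?_⟩
    · rw [← hprod, List.prod_cons, mul_smul]
    · have h1 : dist B S (t.prod • base B) ≤ t.length :=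
        dist_le B S (fun y hy => hl y (List.mem_cons_of_mem x hy)) rfl
      have h2 : (x :: t).length = dist B S c := hlen
      simp only [List.length_cons] at h2
      dsimp only
      omega

variable (hS : Subgroup.closure (S : Set A) = ⊤)

/-- The chosen edge towards the base point. -/
noncomputable def stepF {c : A ⧸ B} (hc : c ≠ base B) : A × (A ⧸ B) :=
  Classical.choose (exists_step B S hS hc)

theorem stepF_spec {c : A ⧸ B} (hc : c ≠ base B) :
    ((stepF B S hS hc).1 ∈ S ∨ (stepF B S hS hc).1⁻¹ ∈ S) ∧
      c = (stepF B S hS hc).1 • (stepF B S hS hc).2 ∧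
      dist B S (stepF B S hS hc).2 < dist B S c :=
  Classical.choose_spec (exists_step B S hS hc)

open Classical in
/-- The Schreier transversal representative. -/
noncomputable def rho (c : A ⧸ B) : A :=
  if hc : c = base B then 1
  else (stepF B S hS hc).1 * rho ((stepF B S hS hc).2)
termination_by dist B S c
decreasing_by exact (stepF_spec B S hS hc).2.2

theorem rho_base : rho B S hS (base B) = 1 := by rw [rho, dif_pos rfl]

theorem rho_mk : ∀ (n : ℕ) (c : A ⧸ B), dist B S c ≤ n → ((rho B S hS c : A) : A ⧸ B) = c := by
  intro n
  induction n with
  | zero =>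
    intro c h
    rw [rho]
    split_ifs with hc
    · subst hc; rfl
    · exact absurd (lt_of_lt_of_le (stepF_spec B S hS hc).2.2 h) (Nat.not_lt_zero _)
  | succ n ih =>
    intro c h
    rw [rho]
    split_ifs with hc
    · subst hc; rfl
    · obtain ⟨hx, hceq, hlt⟩ := stepF_spec B S hS hc
      have hmk : ((((stepF B S hS hc).1 * rho B S hS (stepF B S hS hc).2 : A)) : A ⧸ B)
          = (stepF B S hS hc).1 • ((rho B S hS (stepF B S hS hc).2 : A) : A ⧸ B) := by
        rw [MulAction.Quotient.smul_mk, smul_eq_mul]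
      rw [hmk, ih _ (by omega), ← hceq]

theorem rho_mk' (c : A ⧸ B) : ((rho B S hS c : A) : A ⧸ B) = c :=
  rho_mk B S hS (dist B S c) c le_rfl

/-- The Schreier generator attached to a pair (coset, generator). -/
noncomputable def gam (cs : (A ⧸ B) × A) : A :=
  (rho B S hS (cs.2 • cs.1))⁻¹ * cs.2 * rho B S hS cs.1

theorem gam_mem (c : A ⧸ B) (s : A) : gam B S hS (c, s) ∈ B := by
  have h1 : ((rho B S hS (s • c) : A) : A ⧸ B) = s • c := rho_mk' B S hS _
  have h2 : ((s * rho B S hS c : A) : A ⧸ B) = s • c := by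
    rw [← smul_eq_mul, ← MulAction.Quotient.smul_mk, rho_mk' B S hS c]
  have h3 : (rho B S hS (s • c))⁻¹ * (s * rho B S hS c) ∈ B :=
    QuotientGroup.eq.mp (h1.trans h2.symm)
  simpa [gam, mul_assoc] using h3

theorem closure_gam :
    Subgroup.closure {g : A | ∃ cs : (A ⧸ B) × A, cs.2 ∈ S ∧ g = gam B S hS cs} = B := by
  apply le_antisymm
  · rw [closure_le]
    rintro g ⟨⟨c, s⟩, _, rfl⟩
    exact gam_mem B S hS c s
  · intro g hg
    have key : ∀ (g : A), g ∈ Subgroup.closure (S : Set A) → ∀ c : A ⧸ B,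
        (rho B S hS (g • c))⁻¹ * g * rho B S hS c ∈
          Subgroup.closure {g : A | ∃ cs : (A ⧸ B) × A, cs.2 ∈ S ∧ g = gam B S hS cs} := by
      intro g hgS
      induction hgS using closure_induction with
      | mem x hx => exact fun c => subset_closure ⟨(c, x), hx, rfl⟩
      | one => intro c; simpa using one_mem _
      | mul x y hx hy ihx ihy =>
        intro c
        have h := mul_mem (ihx (y • c)) (ihy c)
        convert h using 1
        rw [mul_smul]
        group
      | inv x hx ihx =>
        intro c
        have h := inv_mem (ihx (x⁻¹ • c))
        rw [smul_inv_smul] at h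
        convert h using 1
        group
    have hb : g • base B = base B := by
      show g • ((1:A) : A ⧸ B) = _
      rw [MulAction.Quotient.smul_mk, smul_eq_mul, mul_one]
      exact (QuotientGroup.eq.mpr (by simpa using inv_mem hg))
    have h := key g (hS ▸ mem_top g) (base B)
    rw [hb, rho_base] at h
    simpa using h

open Classical in
/-- The tree edge map: assigns to each non-base coset a trivial Schreier pair. -/
noncomputable def tmap (c : A ⧸ B) : (A ⧸ B) × A :=
  if hc : c = base B then (c, 1)
  else if (stepF B S hS hc).1 ∈ S then ((stepF B S hS hc).2, (stepF B S hS hc).1)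
  else (c, (stepF B S hS hc).1⁻¹)

theorem tmap_spec {c : A ⧸ B} (hc : c ≠ base B) :
    (tmap B S hS c).2 ∈ S ∧ gam B S hS (tmap B S hS c) = 1 := by
  obtain ⟨hxS, hceq, hlt⟩ := stepF_spec B S hS hc
  have hrho : rho B S hS c = (stepF B S hS hc).1 * rho B S hS (stepF B S hS hc).2 := by
    rw [rho, dif_neg hc]
  rw [tmap, dif_neg hc]
  split_ifs with h1
  · refine ⟨h1, ?_⟩
    show (rho B S hS ((stepF B S hS hc).1 • (stepF B S hS hc).2))⁻¹ * _ * _ = 1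
    rw [← hceq, hrho]
    group
  · refine ⟨hxS.resolve_left h1, ?_⟩
    show (rho B S hS ((stepF B S hS hc).1⁻¹ • c))⁻¹ * _ * _ = 1
    have hp : (stepF B S hS hc).1⁻¹ • c = (stepF B S hS hc).2 :=
      inv_smul_eq_iff.mpr hceq
    rw [hp, hrho]
    group

theorem tmap_injOn : Set.InjOn (tmap B S hS) {c : A ⧸ B | c ≠ base B} := by
  intro c₁ h₁ c₂ h₂ heq
  simp only [Set.mem_setOf_eq] at h₁ h₂
  obtain ⟨hxS₁, hceq₁, hlt₁⟩ := stepF_spec B S hS h₁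
  obtain ⟨hxS₂, hceq₂, hlt₂⟩ := stepF_spec B S hS h₂
  rw [tmap, dif_neg h₁, tmap, dif_neg h₂] at heq
  split_ifs at heq with ha hb hb
  · -- both tree-edges point forward
    have e1 : (stepF B S hS h₁).2 = (stepF B S hS h₂).2 := congrArg Prod.fst heq
    have e2 : (stepF B S hS h₁).1 = (stepF B S hS h₂).1 := congrArg Prod.snd heq
    rw [hceq₁, e1, e2]
    exact hceq₂.symm
  · -- c₁ forward, c₂ backward
    have e1 : (stepF B S hS h₁).2 = c₂ := congrArg Prod.fst heq
    have e2 : (stepF B S hS h₁).1 = (stepF B S hS h₂).1⁻¹ := congrArg Prod.snd heq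
    have hp2 : (stepF B S hS h₂).1⁻¹ • c₂ = (stepF B S hS h₂).2 :=
      inv_smul_eq_iff.mpr hceq₂
    have hc1 : c₁ = (stepF B S hS h₂).2 := by
      rw [hceq₁, e1, e2]; exact hp2
    have d1 : dist B S c₂ < dist B S c₁ := by rw [← e1]; exact hlt₁
    have d2 : dist B S c₁ < dist B S c₂ := by rw [hc1]; exact hlt₂
    omega
  · -- c₁ backward, c₂ forward
    have e1 : c₁ = (stepF B S hS h₂).2 := congrArg Prod.fst heq
    have e2 : (stepF B S hS h₁).1⁻¹ = (stepF B S hS h₂).1 := congrArg Prod.snd heq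
    have hp1 : (stepF B S hS h₁).1⁻¹ • c₁ = (stepF B S hS h₁).2 :=
      inv_smul_eq_iff.mpr hceq₁
    have hc2 : c₂ = (stepF B S hS h₁).2 := by
      rw [hceq₂, ← e2, ← e1]; exact hp1
    have d1 : dist B S c₁ < dist B S c₂ := by rw [e1]; exact hlt₂
    have d2 : dist B S c₂ < dist B S c₁ := by rw [hc2]; exact hlt₁
    omega
  · exact congrArg Prod.fst heq

end RGAux

open Subgroup in
theorem dGen_le {G : Type*} [Group G] (S : Finset G) (hS : Subgroup.closure (S : Set G) = ⊤) :
    dGen G ≤ S.card :=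
  Nat.sInf_le ⟨S, rfl, hS⟩

open Subgroup in
theorem exists_gen_card_dGen (G : Type*) [Group G] [Group.FG G] :
    ∃ S : Finset G, S.card = dGen G ∧ Subgroup.closure (S : Set G) = ⊤ := by
  have hne : {n : ℕ | ∃ S : Finset G, S.card = n ∧ Subgroup.closure (S : Set G) = ⊤}.Nonempty := by
    obtain ⟨n, S, hc, hS⟩ := Group.fg_iff'.mp ‹_›
    exact ⟨n, S, hc, hS⟩
  exact Nat.sInf_mem hne

open Subgroup in
theorem dGen_eq_of_mulEquiv {G : Type*} {H : Type*} [Group G] [Group H] (e : G ≃* H) :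
    dGen G = dGen H := by
  classical
  unfold dGen
  congr 1
  ext n
  constructor
  · rintro ⟨S, hc, hS⟩
    exact ⟨S.image e, by rw [Finset.card_image_of_injective _ e.injective, hc],
      by rw [Finset.coe_image, ← MulEquiv.coe_toMonoidHom, ← MonoidHom.map_closure, hS,
        map_top_of_surjective _ e.surjective]⟩
  · rintro ⟨S, hc, hS⟩
    exact ⟨S.image e.symm, by rw [Finset.card_image_of_injective _ e.symm.injective, hc],
      by rw [Finset.coe_image, ← MulEquiv.coe_toMonoidHom, ← MonoidHom.map_closure, hS,
        map_top_of_surjective _ e.symm.surjective]⟩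

open Subgroup Finset in
theorem schreier_sharp {A : Type*} [Group A] (B : Subgroup A) (hB : B.index ≠ 0)
    (S : Finset A) (hS : Subgroup.closure (S : Set A) = ⊤) :
    dGen B + B.index ≤ B.index * S.card + 1 := by
  classical
  have hfin : Finite (A ⧸ B) := by
    have : Nat.card (A ⧸ B) ≠ 0 := hB
    exact (Nat.card_ne_zero.mp this).2
  haveI : Fintype (A ⧸ B) := Fintype.ofFinite _
  have hn : Fintype.card (A ⧸ B) = B.index := by
    rw [← Nat.card_eq_fintype_card]; rfl
  set P : Finset ((A ⧸ B) × A) := Finset.univ ×ˢ S with hP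
  set T : Finset ((A ⧸ B) × A) := (Finset.univ.erase (RGAux.base B)).image (RGAux.tmap B S hS)
    with hT
  have hTP : T ⊆ P := by
    intro p hp
    rw [hT, Finset.mem_image] at hp
    obtain ⟨c, hc, rfl⟩ := hp
    have hcne : c ≠ RGAux.base B := (Finset.mem_erase.mp hc).1
    rw [hP, Finset.mem_product]
    exact ⟨Finset.mem_univ _, (RGAux.tmap_spec B S hS hcne).1⟩
  have hTcard : T.card = Fintype.card (A ⧸ B) - 1 := by
    rw [hT, Finset.card_image_of_injOn ((RGAux.tmap_injOn B S hS).mono (by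
      intro c hc
      exact (Finset.mem_erase.mp hc).1)),
      Finset.card_erase_of_mem (Finset.mem_univ _), Finset.card_univ]
  set X : Finset A := (P \ T).image (RGAux.gam B S hS) with hX
  have hXB : ∀ g ∈ X, g ∈ B := by
    intro g hg
    rw [hX, Finset.mem_image] at hg
    obtain ⟨⟨c, s⟩, _, rfl⟩ := hg
    exact RGAux.gam_mem B S hS c s
  have hclX : Subgroup.closure (X : Set A) = B := by
    apply le_antisymm
    · rw [closure_le]
      exact fun g hg => hXB g hg
    · rw [← RGAux.closure_gam B S hS]
      rw [closure_le]
      rintro g ⟨⟨c, s⟩, hsS, rfl⟩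
      by_cases hmem : (c, s) ∈ T
      · rw [hT, Finset.mem_image] at hmem
        obtain ⟨c', hc', heq⟩ := hmem
        have hcne : c' ≠ RGAux.base B := (Finset.mem_erase.mp hc').1
        have := (RGAux.tmap_spec B S hS hcne).2
        rw [heq] at this
        rw [this]
        exact SetLike.mem_coe.mpr (one_mem _)
      · have hp : (c, s) ∈ P \ T :=
          Finset.mem_sdiff.mpr ⟨Finset.mem_product.mpr ⟨Finset.mem_univ _, hsS⟩, hmem⟩
        exact subset_closure (Finset.mem_coe.mpr (Finset.mem_image_of_mem _ hp))
  have hXcard : X.card + (Fintype.card (A ⧸ B) - 1) ≤ B.index * S.card := by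
    have h1 : X.card ≤ (P \ T).card := Finset.card_image_le
    have h2 : (P \ T).card = P.card - T.card := Finset.card_sdiff_of_subset hTP
    have h3 : T.card ≤ P.card := Finset.card_le_card hTP
    have h4 : P.card = B.index * S.card := by
      rw [hP, Finset.card_product, Finset.card_univ, hn]
    omega
  -- lift the generating set to ↥B
  set X' : Finset ↥B := X.attach.image (fun x => (⟨x.1, hXB x.1 x.2⟩ : ↥B)) with hX'
  have hX'card : X'.card ≤ X.card := by
    rw [hX']
    exact Finset.card_image_le.trans (by rw [Finset.card_attach])
  have hX'cl : Subgroup.closure (X' : Set ↥B) = ⊤ := by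
    apply Subgroup.map_injective B.subtype_injective
    rw [MonoidHom.map_closure, ← MonoidHom.range_eq_map, B.range_subtype]
    have himg : B.subtype '' (X' : Set ↥B) = (X : Set A) := by
      ext a
      constructor
      · rintro ⟨b, hb, rfl⟩
        rw [hX', Finset.mem_coe, Finset.mem_image] at hb
        obtain ⟨x, -, rfl⟩ := hb
        exact x.2
      · intro ha
        have ha' : a ∈ X := ha
        refine ⟨⟨a, hXB a ha'⟩, ?_, rfl⟩
        rw [hX', Finset.mem_coe, Finset.mem_image]
        exact ⟨⟨a, ha'⟩, Finset.mem_attach _ _, rfl⟩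
    rw [himg, hclX]
  have hdGen : dGen ↥B ≤ X'.card := dGen_le X' hX'cl
  have hn1 : 1 ≤ B.index := Nat.one_le_iff_ne_zero.mpr hB
  rw [← hn] at *
  omega

theorem bddBelow_RGset (G : Type*) [Group G] :
    BddBelow {r : ℝ | ∃ K : Subgroup G, K.index ≠ 0 ∧ r = ((dGen K : ℝ) - 1) / (K.index : ℝ)} := by
  refine ⟨-1, fun r hr => ?_⟩
  obtain ⟨K, hK, rfl⟩ := hr
  have h1 : (1 : ℝ) ≤ (K.index : ℝ) := by exact_mod_cast Nat.one_le_iff_ne_zero.mpr hK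
  have h0 : (0 : ℝ) < (K.index : ℝ) := by linarith
  rw [le_div_iff₀ h0]
  have h2 : (0 : ℝ) ≤ (dGen ↥K : ℝ) := Nat.cast_nonneg _
  nlinarith

theorem nonempty_RGset (G : Type*) [Group G] :
    {r : ℝ | ∃ K : Subgroup G, K.index ≠ 0 ∧ r = ((dGen K : ℝ) - 1) / (K.index : ℝ)}.Nonempty :=
  ⟨((dGen ↥(⊤ : Subgroup G) : ℝ) - 1) / ((⊤ : Subgroup G).index : ℝ),
    ⟨⊤, by rw [Subgroup.index_top]; exact one_ne_zero, rfl⟩⟩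

open Subgroup in
theorem rankGradient_of_finiteIndex' (G : Type*) [Group G] [Group.FG G]
    (H : Subgroup G) (hH : H.index ≠ 0) :
    rankGradient G = rankGradient H / (H.index : ℝ) := by
  have hn1 : (1 : ℝ) ≤ (H.index : ℝ) := by exact_mod_cast Nat.one_le_iff_ne_zero.mpr hH
  have hnpos : (0 : ℝ) < (H.index : ℝ) := by linarith
  have hnne : (H.index : ℝ) ≠ 0 := ne_of_gt hnpos
  apply le_antisymm
  · -- RG(G) ≤ RG(H)/[G:H]
    rw [div_eq_inv_mul, ← smul_eq_mul]
    show rankGradient G ≤ ((H.index : ℝ)⁻¹) • rankGradient H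
    simp only [rankGradient]
    rw [← Real.sInf_smul_of_nonneg (by positivity : (0:ℝ) ≤ ((H.index : ℝ))⁻¹)]
    refine le_csInf ((nonempty_RGset ↥H).smul_set) ?_
    rintro b ⟨r, ⟨K', hK', rfl⟩, rfl⟩
    apply csInf_le (bddBelow_RGset G)
    refine ⟨K'.map H.subtype, ?_, ?_⟩
    · rw [Subgroup.index_map_of_injective _ H.subtype_injective, H.range_subtype]
      exact mul_ne_zero hK' hH
    · have hd : dGen ↥(K'.map H.subtype) = dGen ↥K' :=
        (dGen_eq_of_mulEquiv (Subgroup.equivMapOfInjective K' H.subtype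
          H.subtype_injective)).symm
      rw [hd, Subgroup.index_map_of_injective _ H.subtype_injective, H.range_subtype]
      have hK'ne : (K'.index : ℝ) ≠ 0 := Nat.cast_ne_zero.mpr hK'
      simp only [smul_eq_mul]
      push_cast
      rw [← div_div]
      exact (div_eq_inv_mul _ _).symm
  · -- RG(H)/[G:H] ≤ RG(G)
    refine le_csInf (nonempty_RGset G) ?_
    rintro r ⟨K, hm, rfl⟩
    haveI : K.FiniteIndex := ⟨hm⟩
    haveI : Group.FG ↥K := Subgroup.fg_of_index_ne_zero K
    obtain ⟨S, hScard, hScl⟩ := exists_gen_card_dGen ↥K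
    -- index bookkeeping
    have hKH : (K ⊓ H).index ≠ 0 := Subgroup.index_inf_ne_zero hm hH
    have hHK : (H ⊓ K).index ≠ 0 := by rw [inf_comm]; exact hKH
    have hk : (H.subgroupOf K).index ≠ 0 := by
      have h2 : (H ⊓ K).relIndex K * K.index = (H ⊓ K).index :=
        Subgroup.relIndex_mul_index inf_le_right
      rw [Subgroup.inf_relIndex_right] at h2
      intro h0
      rw [show (H.subgroupOf K).index = H.relIndex K from rfl] at h0
      rw [h0, zero_mul] at h2
      exact hHK h2.symm
    have hrH : (K.subgroupOf H).index ≠ 0 := by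
      have h2 : (K ⊓ H).relIndex H * H.index = (K ⊓ H).index :=
        Subgroup.relIndex_mul_index inf_le_right
      rw [Subgroup.inf_relIndex_right] at h2
      intro h0
      rw [show (K.subgroupOf H).index = K.relIndex H from rfl] at h0
      rw [h0, zero_mul] at h2
      exact hKH h2.symm
    -- Schreier
    have hsch := schreier_sharp (H.subgroupOf K) hk S hScl
    rw [hScard] at hsch
    -- dGen equality
    have hdeq : dGen ↥(K.subgroupOf H) = dGen ↥(H.subgroupOf K) := by
      have e1 : dGen ↥(K.subgroupOf H) = dGen ↥(K ⊓ H) := by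
        rw [← Subgroup.inf_subgroupOf_right]
        exact dGen_eq_of_mulEquiv (Subgroup.subgroupOfEquivOfLe inf_le_right)
      have e2 : dGen ↥(H.subgroupOf K) = dGen ↥(H ⊓ K) := by
        rw [← Subgroup.inf_subgroupOf_right]
        exact dGen_eq_of_mulEquiv (Subgroup.subgroupOfEquivOfLe inf_le_right)
      rw [e1, e2, inf_comm]
    -- index identity
    have hidx : (K.subgroupOf H).index * H.index = (H.subgroupOf K).index * K.index := by
      have a1 : (K ⊓ H).relIndex H * H.index = (K ⊓ H).index :=
        Subgroup.relIndex_mul_index inf_le_right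
      have a2 : (H ⊓ K).relIndex K * K.index = (H ⊓ K).index :=
        Subgroup.relIndex_mul_index inf_le_right
      rw [Subgroup.inf_relIndex_right] at a1 a2
      show K.relIndex H * H.index = H.relIndex K * K.index
      rw [a1, a2, inf_comm]
    -- chain of inequalities
    have hmem : ((dGen ↥(K.subgroupOf H) : ℝ) - 1) / ((K.subgroupOf H).index : ℝ) ∈
        {r : ℝ | ∃ K' : Subgroup ↥H, K'.index ≠ 0 ∧
          r = ((dGen K' : ℝ) - 1) / (K'.index : ℝ)} :=
      ⟨K.subgroupOf H, hrH, rfl⟩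
    have hle : rankGradient ↥H ≤
        ((dGen ↥(K.subgroupOf H) : ℝ) - 1) / ((K.subgroupOf H).index : ℝ) :=
      csInf_le (bddBelow_RGset ↥H) hmem
    have step1 : rankGradient ↥H / (H.index : ℝ) ≤
        ((dGen ↥(K.subgroupOf H) : ℝ) - 1) / ((K.subgroupOf H).index : ℝ) / (H.index : ℝ) :=
      (div_le_div_iff_of_pos_right hnpos).mpr hle
    refine step1.trans ?_
    rw [div_div, hdeq]
    have hcast : ((K.subgroupOf H).index : ℝ) * (H.index : ℝ)
        = ((H.subgroupOf K).index : ℝ) * (K.index : ℝ) := by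
      exact_mod_cast congrArg (Nat.cast : ℕ → ℝ) hidx
    rw [hcast]
    -- final: (dB - 1)/(k*m) ≤ (dK - 1)/m  from  dB + k ≤ k*dK + 1
    have hk1 : (1 : ℝ) ≤ ((H.subgroupOf K).index : ℝ) := by
      exact_mod_cast Nat.one_le_iff_ne_zero.mpr hk
    have hm1 : (1 : ℝ) ≤ (K.index : ℝ) := by
      exact_mod_cast Nat.one_le_iff_ne_zero.mpr hm
    have hsch' : (dGen ↥(H.subgroupOf K) : ℝ) + ((H.subgroupOf K).index : ℝ) ≤
        ((H.subgroupOf K).index : ℝ) * (dGen ↥K : ℝ) + 1 := by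
      exact_mod_cast hsch
    rw [div_le_div_iff₀ (by nlinarith) (by linarith)]
    nlinarith


/-- For a finitely generated group `G` and a finite-index subgroup `H`,
`RG(G) = RG(H) / [G : H]`. -/
theorem rankGradient_of_finiteIndex (G : Type*) [Group G] [Group.FG G]
    (H : Subgroup G) (hH : H.index ≠ 0) :
    rankGradient G = rankGradient H / (H.index : ℝ) := by
  exact rankGradient_of_finiteIndex' G H hH
end

section
/- Fix a prime p and let G be a p-torsion group, i.e., every element of G has order a power of p. Then every finite-index subgroup H ≤ G is subnormal in G of index a power of p: there is a finite chain H = H_0 ⊴ H_1 ⊴ ... ⊴ H_n = G with each term normal in the next, and [G : H] is a power of p. -/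
/-- `H` is subnormal in `G`: there is a finite chain from `H` to `G`,
each term normal in the next. -/
def IsSubnormal {G : Type*} [Group G] (H : Subgroup G) : Prop :=
  ∃ (n : ℕ) (c : ℕ → Subgroup G), c 0 = H ∧ c n = ⊤ ∧
    ∀ i < n, c i ≤ c (i + 1) ∧ ((c i).subgroupOf (c (i + 1))).Normal

/-- Extend a subnormal chain by one step at the bottom. -/
theorem IsSubnormal.step {G : Type*} [Group G] {K L : Subgroup G} (hKL : K ≤ L)
    (hnorm : (K.subgroupOf L).Normal) (hL : IsSubnormal L) : IsSubnormal K := by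
  obtain ⟨n, c, hc0, hcn, hstep⟩ := hL
  refine ⟨n + 1, fun i => if i = 0 then K else c (i - 1), by simp, by simp [hcn], ?_⟩
  intro i hi
  rcases Nat.eq_zero_or_pos i with rfl | hpos
  · simp only [zero_add, if_pos rfl, if_neg Nat.one_ne_zero, show (1:ℕ) - 1 = 0 from rfl]
    show K ≤ c 0 ∧ (K.subgroupOf (c 0)).Normal
    rw [hc0]
    exact ⟨hKL, hnorm⟩
  · have h1 : ¬ (i = 0) := hpos.ne'
    have h2 : ¬ (i + 1 = 0) := by omega
    simp only [h1, h2, if_false]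
    have : i + 1 - 1 = (i - 1) + 1 := by omega
    show c (i - 1) ≤ c (i + 1 - 1) ∧ ((c (i - 1)).subgroupOf (c (i + 1 - 1))).Normal
    rw [this]
    exact hstep (i - 1) (by omega)

/-- In a finite group with the normalizer condition, every subgroup is subnormal. -/
theorem isSubnormal_of_normalizerCondition {Q : Type*} [Group Q] [Finite Q]
    (hnc : NormalizerCondition Q) (K : Subgroup Q) : IsSubnormal K := by
  suffices h : ∀ (d : ℕ) (K : Subgroup Q), Nat.card Q - Nat.card K ≤ d → IsSubnormal K from
    h (Nat.card Q) K (Nat.sub_le _ _)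
  intro d
  induction d with
  | zero =>
    intro K hK
    have hcard : Nat.card K = Nat.card Q :=
      le_antisymm (Nat.card_le_card_of_injective _ K.subtype_injective) (by omega)
    have : K = ⊤ := Subgroup.eq_top_of_card_eq K hcard
    exact ⟨0, fun _ => ⊤, by simp [this], rfl, by omega⟩
  | succ d ih =>
    intro K hK
    by_cases htop : K = ⊤
    · exact ⟨0, fun _ => ⊤, by simp [htop], rfl, by omega⟩
    · have hlt : K < (Subgroup.normalizer (K : Set Q)) := hnc K (lt_top_iff_ne_top.mpr htop)
      have hcardlt : Nat.card K < Nat.card (Subgroup.normalizer (K : Set Q)) := by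
        have hsub : (K : Set Q) ⊂ ((Subgroup.normalizer (K : Set Q)) : Set Q) := by
          rw [Set.ssubset_iff_of_subset (by exact_mod_cast hlt.le)]
          obtain ⟨x, hxN, hxK⟩ := SetLike.exists_of_lt hlt
          exact ⟨x, hxN, hxK⟩
        have := Set.Finite.card_lt_card (Set.toFinite _) hsub
        simpa [Nat.card_coe_set_eq] using this
      have hle : Nat.card (Subgroup.normalizer (K : Set Q)) ≤ Nat.card Q :=
        Nat.card_le_card_of_injective _ (Subgroup.normalizer (K : Set Q)).subtype_injective
      have hN := ih (Subgroup.normalizer (K : Set Q)) (by omega)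
      exact hN.step hlt.le Subgroup.normal_in_normalizer

/-- in a `p`-torsion group every finite-index subgroup is subnormal of
`p`-power index. -/
theorem subnormal_of_finiteIndex_of_pTorsion (p : ℕ) (hp : p.Prime)
    (G : Type*) [Group G] (htor : ∀ g : G, ∃ k : ℕ, orderOf g = p ^ k)
    (H : Subgroup G) (hH : H.index ≠ 0) :
    IsSubnormal H ∧ ∃ k : ℕ, H.index = p ^ k := by
  haveI : Fact p.Prime := ⟨hp⟩
  haveI : H.FiniteIndex := ⟨hH⟩
  set N := H.normalCore with hN
  haveI : N.FiniteIndex := Subgroup.finiteIndex_normalCore H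
  haveI : Finite (G ⧸ N) := by
    have : Nat.card (G ⧸ N) ≠ 0 := Subgroup.FiniteIndex.index_ne_zero (H := N)
    exact Nat.finite_of_card_ne_zero this
  have hpG : IsPGroup p G := fun g => by
    obtain ⟨k, hk⟩ := htor g
    exact ⟨k, by rw [← hk]; exact pow_orderOf_eq_one g⟩
  have hpQ : IsPGroup p (G ⧸ N) := hpG.to_quotient N
  haveI : Group.IsNilpotent (G ⧸ N) := hpQ.isNilpotent
  have hnc : NormalizerCondition (G ⧸ N) := normalizerCondition_of_isNilpotent
  set φ := QuotientGroup.mk' N with hφ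
  have hker : φ.ker = N := QuotientGroup.ker_mk' N
  have hNH : N ≤ H := Subgroup.normalCore_le H
  set K := H.map φ with hK
  have hcomap : K.comap φ = H := by
    rw [hK, Subgroup.comap_map_eq, hker, sup_of_le_left hNH]
  have hsurj : Function.Surjective φ := QuotientGroup.mk'_surjective N
  clear_value K
  have hindex : H.index = K.index := by
    have h := Subgroup.index_comap_of_surjective K hsurj
    rw [hcomap] at h
    exact h
  constructor
  · -- subnormality: pull back a chain from the quotient
    obtain ⟨n, c, hc0, hcn, hstep⟩ := isSubnormal_of_normalizerCondition hnc K
    refine ⟨n, fun i => (c i).comap φ, ?_, ?_, ?_⟩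
    · show (c 0).comap φ = H
      rw [hc0, hcomap]
    · show (c n).comap φ = ⊤
      rw [hcn]; exact Subgroup.comap_top φ
    intro i hi
    obtain ⟨hle, hnorm⟩ := hstep i hi
    refine ⟨Subgroup.comap_mono hle, ?_⟩
    rw [Subgroup.normal_subgroupOf_iff (Subgroup.comap_mono hle)]
    intro a b ha hb
    have := (Subgroup.normal_subgroupOf_iff hle).mp hnorm (φ a) (φ b) ha hb
    simpa [Subgroup.mem_comap] using this
  · -- index is a power of p
    obtain ⟨m, hm⟩ := hpQ.exists_card_eq
    have hdvd : K.index ∣ p ^ m := hm ▸ Subgroup.index_dvd_card (H := K)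
    obtain ⟨k, _, hk⟩ := (Nat.dvd_prime_pow hp).mp hdvd
    exact ⟨k, by rw [hindex, hk]⟩
end
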